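/- Let G be a finite simple graph, let P = v_0 v_1 ⋯ v_ℓ be a path in G with endpoints x = v_0 and y = v_ℓ, and let H be a connected component of G − V(P) having a neighbor v_i on P (i.e., some vertex of H is adjacent to v_i). If P is an x-fiber, then i < ℓ, and moreover if i > 0 then v_ℓ and v_{i−1} are not adjacent in G. -/

import Mathlib

open SimpleGraph

/-- `p` is an `x`-fiber of `G`: a longest path among all paths having `x` as an
endpoint. -/
def IsXFiber {V : Type} (G : SimpleGraph V) {x y : V} (p : G.Walk x y) : Prop :=
  p.IsPath ∧ ∀ (z : V) (q : G.Walk x z), q.IsPath → q.length ≤ p.length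

lemma getVert_injOn_aux {V : Type} {G : SimpleGraph V} {u v : V} {p : G.Walk u v}
    (hp : p.IsPath) : ∀ {i j : ℕ}, i ≤ p.length → j ≤ p.length →
      p.getVert i = p.getVert j → i = j := by
  induction p with
  | nil => intro i j hi hj _; simp only [SimpleGraph.Walk.length_nil] at hi hj; omega
  | cons hadj q ih =>
    rename_i a b c
    rw [SimpleGraph.Walk.cons_isPath_iff] at hp
    intro i j hi hj hij
    match i, j with
    | 0, 0 => rfl
    | 0, k + 1 =>
      exfalso
      apply hp.2
      rw [SimpleGraph.Walk.mem_support_iff_exists_getVert]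
      refine ⟨k, ?_, ?_⟩
      · simpa [SimpleGraph.Walk.getVert_zero, SimpleGraph.Walk.getVert_cons_succ] using hij.symm
      · simpa using hj
    | k + 1, 0 =>
      exfalso
      apply hp.2
      rw [SimpleGraph.Walk.mem_support_iff_exists_getVert]
      refine ⟨k, ?_, ?_⟩
      · simpa [SimpleGraph.Walk.getVert_zero, SimpleGraph.Walk.getVert_cons_succ] using hij
      · simpa using hi
    | k + 1, m + 1 =>
      have := ih hp.1 (by simpa using hi) (by simpa using hj)
        (by simpa [SimpleGraph.Walk.getVert_cons_succ] using hij)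
      omega

/-- Let `P = v₀ ⋯ v_ℓ` be an `x`-fiber with `x = v₀`, `y = v_ℓ`, and let `H` be a
component of `G - V(P)` with a neighbor `vᵢ` on `P`. Then `i < ℓ`, and if `i > 0`
then `y v_{i-1} ∉ E(G)`. -/
theorem x_fiber_attachment
    {V : Type} [Fintype V] (G : SimpleGraph V) {x y : V}
    (p : G.Walk x y) (hp : IsXFiber G p)
    (C : (G.induce {v : V | v ∉ p.support}).ConnectedComponent)
    (i : ℕ) (hi : i ≤ p.length)
    (h : {v : V | v ∉ p.support})
    (hC : (G.induce {v : V | v ∉ p.support}).connectedComponentMk h = C)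
    (hadj : G.Adj ↑h (p.getVert i)) :
    i < p.length ∧ (0 < i → ¬ G.Adj y (p.getVert (i - 1))) := by
  classical
  have hh : (h : V) ∉ p.support := h.2
  have h1 : i < p.length := by
    rcases lt_or_eq_of_le hi with hlt | heq
    · exact hlt
    · exfalso
      rw [heq, p.getVert_length] at hadj
      set w : G.Walk x ↑h := p.concat hadj.symm with hw
      have hwpath : w.IsPath := by
        rw [SimpleGraph.Walk.isPath_def, hw, SimpleGraph.Walk.support_concat,
          List.nodup_append]
        refine ⟨hp.1.support_nodup, List.nodup_singleton _, ?_⟩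
        intro a ha b hb hab
        rw [List.mem_singleton] at hb
        subst hb; subst hab; exact hh ha
      have := hp.2 _ w hwpath
      rw [hw, SimpleGraph.Walk.length_concat] at this
      omega
  refine ⟨h1, fun hi0 hyadj => ?_⟩
  set j := i - 1 with hj
  have hij : i = j + 1 := by omega
  have hjlt : j < p.length := by omega
  set u := p.getVert j with hu
  have humem : u ∈ p.support :=
    SimpleGraph.Walk.mem_support_iff_exists_getVert.mpr ⟨j, rfl, by omega⟩
  set q₁ := p.takeUntil u humem with hq₁
  set q₂ := p.dropUntil u humem with hq₂
  have hspec : q₁.append q₂ = p := p.take_spec humem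
  have hlensum : q₁.length + q₂.length = p.length := by
    rw [← hspec, SimpleGraph.Walk.length_append]
  have hlen1 : q₁.length = j := by
    have h1le : q₁.length ≤ p.length := p.length_takeUntil_le humem
    have : p.getVert q₁.length = u := by
      conv_lhs => rw [← hspec]
      rw [SimpleGraph.Walk.getVert_append]
      simp [SimpleGraph.Walk.getVert_zero]
    exact getVert_injOn_aux hp.1 h1le (by omega) (this.trans rfl)
  have hq₂nil : ¬ q₂.Nil := by
    rw [SimpleGraph.Walk.not_nil_iff_lt_length]
    omega
  obtain ⟨v, hadjuv, q₃, hq₃⟩ := SimpleGraph.Walk.not_nil_iff.mp hq₂nil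
  have hv : v = p.getVert i := by
    have : p.getVert (q₁.length + 1) = q₂.getVert 1 := by
      conv_lhs => rw [← hspec]
      rw [SimpleGraph.Walk.getVert_append]
      simp
    rw [hij, ← hlen1, this, hq₃, SimpleGraph.Walk.getVert_cons _ _ one_ne_zero, Nat.sub_self,
      SimpleGraph.Walk.getVert_zero]
  have hvh : G.Adj v ↑h := by rw [hv]; exact hadj.symm
  set w : G.Walk x ↑h :=
    q₁.append (SimpleGraph.Walk.cons hyadj.symm (q₃.reverse.concat hvh)) with hw
  have hwlen : w.length = p.length + 1 := by
    rw [hw, SimpleGraph.Walk.length_append, SimpleGraph.Walk.length_cons,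
      SimpleGraph.Walk.length_concat, SimpleGraph.Walk.length_reverse]
    have : q₂.length = q₃.length + 1 := by rw [hq₃]; simp
    omega
  have hwsupp : w.support = q₁.support ++ (q₃.support.reverse ++ [(h : V)]) := by
    rw [hw, SimpleGraph.Walk.support_append, SimpleGraph.Walk.support_cons,
      List.tail_cons, SimpleGraph.Walk.support_concat,
      SimpleGraph.Walk.support_reverse]
  have hpsupp : p.support = q₁.support ++ q₃.support := by
    rw [← hspec, SimpleGraph.Walk.support_append, hq₃,
      SimpleGraph.Walk.support_cons, List.tail_cons]
  have hperm : w.support.Perm (p.support ++ [(h : V)]) := by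
    rw [hwsupp]
    refine (List.Perm.append_left _ (List.Perm.append_right _ (List.reverse_perm _))).trans ?_
    rw [← List.append_assoc, ← hpsupp]
  have hwpath : w.IsPath := by
    rw [SimpleGraph.Walk.isPath_def, hperm.nodup_iff, List.nodup_append]
    refine ⟨hp.1.support_nodup, List.nodup_singleton _, ?_⟩
    intro a ha b hb hab
    rw [List.mem_singleton] at hb
    subst hb; subst hab; exact hh ha
  have := hp.2 _ w hwpath
  omega
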